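/- For every α ∈ (0,1), every K ≥ 1, every smooth compactly supported function φ : ℝ → ℝ with support contained in [-K, K], every λ ∈ {-1, 1}, and all real bounds B₁, B₂ with 0 < B₁ ≤ B₂ ≤ ∞ and L ≥ 1, one has |∫_{B₁}^{B₂} r^{-α} e^{iλr} φ(r/L) dr| ≤ C (B₁^{-α} ‖φ‖_∞ + K^{1-α} L^{-α} ‖φ'‖_∞) for a constant C depending only on α. -/

import Mathlib

open MeasureTheory Real Set intervalIntegral

noncomputable def supNorm (φ : ℝ → ℝ) : ℝ := ⨆ x, |φ x|

lemma supNorm_nonneg (φ : ℝ → ℝ) : 0 ≤ supNorm φ :=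
  Real.iSup_nonneg fun x => abs_nonneg _

lemma abs_le_supNorm {φ : ℝ → ℝ} (hc : Continuous φ) (hs : HasCompactSupport φ) (x : ℝ) :
    |φ x| ≤ supNorm φ :=
  le_ciSup (hc.abs.bddAbove_range_of_hasCompactSupport hs.abs) x

set_option maxHeartbeats 2000000 in
lemma core (α : ℝ) (hα0 : 0 < α) (hα1 : α < 1)
    (K : ℝ) (hK : 1 ≤ K) (φ : ℝ → ℝ) (hφ : ContDiff ℝ 1 φ)
    (hsupp : Function.support φ ⊆ Set.Icc (-K) K)
    (l : ℝ) (hl : l = -1 ∨ l = 1) (L : ℝ) (hL : 1 ≤ L)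
    (a b : ℝ) (ha : 0 < a) (hab : a ≤ b) (hbKL : b ≤ K * L) :
    ‖∫ r in a..b, ((r ^ (-α) : ℝ) : ℂ) * Complex.exp (Complex.I * (l:ℂ) * (r:ℂ))
        * ((φ (r / L) : ℝ) : ℂ)‖
      ≤ 3 * (a ^ (-α) * supNorm φ)
        + (1/(1-α)) * (K ^ (1-α) * L ^ (-α) * supNorm (deriv φ)) := by
  have hL0 : (0:ℝ) < L := lt_of_lt_of_le one_pos hL
  have hK0 : (0:ℝ) < K := lt_of_lt_of_le one_pos hK
  have hcs : HasCompactSupport φ :=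
    HasCompactSupport.intro isCompact_Icc fun x hx => by
      by_contra h; exact hx (hsupp h)
  have hφc : Continuous φ := hφ.continuous
  have hφ'c : Continuous (deriv φ) := hφ.continuous_deriv le_rfl
  have hcs' : HasCompactSupport (deriv φ) := hcs.deriv
  set Mφ := supNorm φ with hMφ
  set Mφ' := supNorm (deriv φ) with hMφ'
  have hMφ0 : 0 ≤ Mφ := supNorm_nonneg φ
  have hMφ'0 : 0 ≤ Mφ' := supNorm_nonneg (deriv φ)
  have hφle : ∀ x, |φ x| ≤ Mφ := abs_le_supNorm hφc hcs
  have hφ'le : ∀ x, |deriv φ x| ≤ Mφ' := abs_le_supNorm hφ'c hcs'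
  set c : ℂ := Complex.I * (l:ℂ) with hc
  have hc0 : c ≠ 0 := by
    rcases hl with h | h <;> simp [hc, h, Complex.ext_iff]
  have hcnorm : ‖c‖ = 1 := by
    rcases hl with h | h <;> simp [hc, h]
  have hexp : ∀ x : ℝ, ‖Complex.exp (c * x)‖ = 1 := by
    intro x
    rw [Complex.norm_exp]
    have : (c * x).re = 0 := by simp [hc]
    rw [this, Real.exp_zero]
  -- functions
  set u : ℝ → ℂ := fun r => ((r ^ (-α) : ℝ) : ℂ) * ((φ (r / L) : ℝ) : ℂ) with hu_def
  set v : ℝ → ℂ := fun r => Complex.exp (c * r) / c with hv_def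
  set A : ℝ → ℂ := fun r => (((-α) * r ^ (-α-1) : ℝ) : ℂ) * ((φ (r / L) : ℝ) : ℂ) with hA_def
  set B : ℝ → ℂ := fun r => ((r ^ (-α) : ℝ) : ℂ) * ((deriv φ (r / L) / L : ℝ) : ℂ) with hB_def
  set v' : ℝ → ℂ := fun r => Complex.exp (c * r) with hv'_def
  have hmem : ∀ x ∈ uIcc a b, 0 < x := by
    intro x hx
    rw [uIcc_of_le hab] at hx
    exact lt_of_lt_of_le ha hx.1
  have hu : ∀ x ∈ uIcc a b, HasDerivAt u (A x + B x) x := by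
    intro x hx
    have hx0 := hmem x hx
    have h1 : HasDerivAt (fun r : ℝ => ((r ^ (-α) : ℝ) : ℂ)) (((-α) * x ^ (-α-1) : ℝ) : ℂ) x := by
      have := (Real.hasDerivAt_rpow_const (x := x) (p := -α) (Or.inl hx0.ne')).ofReal_comp
      simpa [sub_eq_add_neg, add_comm] using this
    have h2 : HasDerivAt (fun r : ℝ => ((φ (r / L) : ℝ) : ℂ)) ((deriv φ (x / L) * (1 / L) : ℝ) : ℂ) x := by
      have hd : HasDerivAt φ (deriv φ (x / L)) (x / L) :=
        ((hφ.differentiable one_ne_zero) (x / L)).hasDerivAt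
      have hcomp : HasDerivAt (fun r : ℝ => φ (r / L)) (deriv φ (x / L) * (1 / L)) x := by
        have hid : HasDerivAt (fun r : ℝ => r / L) (1 / L) x := (hasDerivAt_id x).div_const L
        exact HasDerivAt.comp x hd hid
      exact hcomp.ofReal_comp
    have := h1.mul h2
    refine this.congr_deriv ?_
    simp only [hA_def, hB_def]
    push_cast
    ring
  have hv : ∀ x ∈ uIcc a b, HasDerivAt v (v' x) x := by
    intro x _
    have hid : HasDerivAt (fun r : ℝ => (r : ℂ)) 1 x := (hasDerivAt_id x).ofReal_comp
    have := ((hid.const_mul c).cexp).div_const c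
    refine this.congr_deriv ?_
    field_simp
    rfl
  -- continuity facts
  have hrc : ContinuousOn (fun r : ℝ => r ^ (-α)) (uIcc a b) :=
    continuousOn_id.rpow_const fun x hx => Or.inl (hmem x hx).ne'
  have hrc1 : ContinuousOn (fun r : ℝ => r ^ (-α-1)) (uIcc a b) :=
    continuousOn_id.rpow_const fun x hx => Or.inl (hmem x hx).ne'
  have hφcc : Continuous fun r : ℝ => ((φ (r / L) : ℝ) : ℂ) :=
    Complex.continuous_ofReal.comp (hφc.comp (continuous_id.div_const L))
  have hφ'cc : Continuous fun r : ℝ => ((deriv φ (r / L) / L : ℝ) : ℂ) :=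
    Complex.continuous_ofReal.comp ((hφ'c.comp (continuous_id.div_const L)).div_const L)
  have hAc : ContinuousOn A (uIcc a b) := by
    apply ContinuousOn.mul _ hφcc.continuousOn
    exact Complex.continuous_ofReal.comp_continuousOn (continuousOn_const.mul hrc1)
  have hBc : ContinuousOn B (uIcc a b) := by
    apply ContinuousOn.mul _ hφ'cc.continuousOn
    exact Complex.continuous_ofReal.comp_continuousOn hrc
  have hvc : Continuous v' := (continuous_const.mul Complex.continuous_ofReal).cexp
  have hABint : IntervalIntegrable (fun x => A x + B x) volume a b :=
    ((hAc.add hBc).intervalIntegrable)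
  have hvint : IntervalIntegrable v' volume a b := hvc.intervalIntegrable a b
  have hIBP := intervalIntegral.integral_mul_deriv_eq_deriv_mul hu hv hABint hvint
  have hEq : (∫ r in a..b, ((r ^ (-α) : ℝ) : ℂ) * Complex.exp (Complex.I * (l:ℂ) * (r:ℂ))
        * ((φ (r / L) : ℝ) : ℂ)) = ∫ x in a..b, u x * v' x := by
    apply intervalIntegral.integral_congr
    intro x _
    simp only [hu_def, hv'_def, hc]
    ring
  rw [hEq, hIBP]
  -- split the derivative integral
  have hsplit : (∫ x in a..b, (A x + B x) * v x)
      = (∫ x in a..b, A x * v x) + ∫ x in a..b, B x * v x := by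
    rw [← intervalIntegral.integral_add]
    · apply intervalIntegral.integral_congr; intro x _; ring
    · exact (hAc.mul ((hvc.div_const c).continuousOn)).intervalIntegrable
    · exact (hBc.mul ((hvc.div_const c).continuousOn)).intervalIntegrable
  have hvnorm : ∀ x : ℝ, ‖v x‖ = 1 := by
    intro x
    simp only [hv_def, norm_div, hexp, hcnorm, div_one]
  have hunorm : ∀ x : ℝ, 0 < x → x ≥ a → ‖u x‖ ≤ a ^ (-α) * Mφ := by
    intro x hx0 hxa
    simp only [hu_def, norm_mul, Complex.norm_real, Real.norm_eq_abs]
    have h1 : |x ^ (-α)| ≤ a ^ (-α) := by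
      rw [abs_of_nonneg (Real.rpow_nonneg hx0.le _)]
      exact Real.rpow_le_rpow_of_nonpos ha hxa (neg_nonpos.mpr hα0.le)
    exact mul_le_mul h1 (hφle _) (abs_nonneg _) (Real.rpow_nonneg ha.le _)
  have hrc1' : ContinuousOn (fun x : ℝ => (α * Mφ) * x ^ (-α-1)) (uIcc a b) := continuousOn_const.mul hrc1
  have hubnorm : ‖u b * v b‖ ≤ a ^ (-α) * Mφ := by
    rw [norm_mul, hvnorm, mul_one]
    exact hunorm b (lt_of_lt_of_le ha hab) hab
  have huanorm : ‖u a * v a‖ ≤ a ^ (-α) * Mφ := by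
    rw [norm_mul, hvnorm, mul_one]
    exact hunorm a ha le_rfl
  -- bound for the A-integral
  have hIArpow : (∫ x in a..b, x ^ (-α-1)) = (a ^ (-α) - b ^ (-α)) / α := by
    rw [integral_rpow (Or.inr ⟨by linarith, by
      rw [uIcc_of_le hab]; intro h; exact absurd h.1 (by linarith)⟩)]
    have h' : -α - 1 + 1 = -α := by ring
    rw [h']
    field_simp [hα0.ne']
    ring
  have hIA : ‖∫ x in a..b, A x * v x‖ ≤ a ^ (-α) * Mφ := by
    have h1 : ‖∫ x in a..b, A x * v x‖ ≤ ∫ x in a..b, ‖A x * v x‖ :=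
      intervalIntegral.norm_integral_le_integral_norm hab
    have h2 : (∫ x in a..b, ‖A x * v x‖) ≤ ∫ x in a..b, (α * Mφ) * x ^ (-α-1) := by
      apply intervalIntegral.integral_mono_on hab
      · exact ((hAc.mul ((hvc.div_const c).continuousOn)).norm).intervalIntegrable
      · exact hrc1'.intervalIntegrable
      · intro x hx
        have hx0 : 0 < x := lt_of_lt_of_le ha hx.1
        rw [norm_mul, hvnorm, mul_one]
        simp only [hA_def, norm_mul, Complex.norm_real, Real.norm_eq_abs]
        rw [abs_neg, abs_of_pos hα0, abs_of_nonneg (Real.rpow_nonneg hx0.le (-α-1))]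
        calc α * x ^ (-α-1) * |φ (x / L)| ≤ α * x ^ (-α-1) * Mφ :=
              mul_le_mul_of_nonneg_left (hφle _)
                (mul_nonneg hα0.le (Real.rpow_nonneg hx0.le _))
          _ = α * Mφ * x ^ (-α-1) := by ring
    have h3 : (∫ x in a..b, (α * Mφ) * x ^ (-α-1)) ≤ a ^ (-α) * Mφ := by
      rw [intervalIntegral.integral_const_mul, hIArpow]
      have hb0 : (0:ℝ) ≤ b ^ (-α) := Real.rpow_nonneg (ha.trans_le hab).le _
      have heq : α * Mφ * ((a ^ (-α) - b ^ (-α)) / α) = Mφ * (a ^ (-α) - b ^ (-α)) := by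
        field_simp
      rw [heq]
      nlinarith [Real.rpow_nonneg ha.le (-α)]
    linarith
  -- bound for the B-integral
  have hIBrpow : (∫ x in a..b, x ^ (-α)) = (b ^ (1-α) - a ^ (1-α)) / (1-α) := by
    rw [integral_rpow (Or.inl (by linarith))]
    have h' : -α + 1 = 1 - α := by ring
    rw [h']
  have hIB : ‖∫ x in a..b, B x * v x‖ ≤ (1/(1-α)) * (K ^ (1-α) * L ^ (-α) * Mφ') := by
    have h1 : ‖∫ x in a..b, B x * v x‖ ≤ ∫ x in a..b, ‖B x * v x‖ :=
      intervalIntegral.norm_integral_le_integral_norm hab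
    have h2 : (∫ x in a..b, ‖B x * v x‖) ≤ ∫ x in a..b, (Mφ' / L) * x ^ (-α) := by
      apply intervalIntegral.integral_mono_on hab
      · exact ((hBc.mul ((hvc.div_const c).continuousOn)).norm).intervalIntegrable
      · exact (continuousOn_const.mul hrc).intervalIntegrable
      · intro x hx
        have hx0 : 0 < x := lt_of_lt_of_le ha hx.1
        rw [norm_mul, hvnorm, mul_one]
        simp only [hB_def, norm_mul, Complex.norm_real, Real.norm_eq_abs]
        have e1 : |x ^ (-α)| = x ^ (-α) := abs_of_nonneg (Real.rpow_nonneg hx0.le _)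
        rw [e1]
        have e2 : |deriv φ (x / L) / L| ≤ Mφ' / L := by
          rw [abs_div, abs_of_pos hL0]
          gcongr
          exact hφ'le _
        calc x ^ (-α) * |deriv φ (x / L) / L| ≤ x ^ (-α) * (Mφ' / L) :=
              mul_le_mul_of_nonneg_left e2 (Real.rpow_nonneg hx0.le _)
          _ = (Mφ' / L) * x ^ (-α) := by ring
    have h3 : (∫ x in a..b, (Mφ' / L) * x ^ (-α)) ≤ (1/(1-α)) * (K ^ (1-α) * L ^ (-α) * Mφ') := by
      rw [intervalIntegral.integral_const_mul, hIBrpow]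
      have h1α : (0:ℝ) < 1 - α := by linarith
      have ha' : (0:ℝ) ≤ a ^ (1-α) := Real.rpow_nonneg ha.le _
      have hb' : b ^ (1-α) ≤ (K*L) ^ (1-α) := by
        apply Real.rpow_le_rpow (ha.trans_le hab).le hbKL h1α.le
      have hKL : (K*L) ^ (1-α) = K ^ (1-α) * L ^ (1-α) := Real.mul_rpow hK0.le hL0.le
      have hLL : L ^ (1-α) / L = L ^ (-α) := by
        rw [div_eq_mul_inv, ← Real.rpow_neg_one L, ← Real.rpow_add hL0]
        congr 1
        ring
      calc Mφ' / L * ((b ^ (1-α) - a ^ (1-α)) / (1-α))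
          ≤ Mφ' / L * ((K*L) ^ (1-α) / (1-α)) := by
            apply mul_le_mul_of_nonneg_left _ (div_nonneg hMφ'0 hL0.le)
            gcongr
            linarith
        _ = (1/(1-α)) * (K ^ (1-α) * L ^ (-α) * Mφ') := by
            rw [hKL, ← hLL]
            field_simp
    linarith
  -- assemble
  rw [hsplit]
  set X := u b * v b
  set Y := u a * v a
  set I₁ := ∫ x in a..b, A x * v x
  set I₂ := ∫ x in a..b, B x * v x
  have htri : ‖X - Y - (I₁ + I₂)‖ ≤ ‖X‖ + ‖Y‖ + (‖I₁‖ + ‖I₂‖) :=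
    calc ‖X - Y - (I₁ + I₂)‖ ≤ ‖X - Y‖ + ‖I₁ + I₂‖ := norm_sub_le _ _
      _ ≤ (‖X‖ + ‖Y‖) + (‖I₁‖ + ‖I₂‖) := add_le_add (norm_sub_le _ _) (norm_add_le _ _)
  calc ‖X - Y - (I₁ + I₂)‖ ≤ ‖X‖ + ‖Y‖ + (‖I₁‖ + ‖I₂‖) := htri
    _ ≤ (a ^ (-α) * Mφ) + (a ^ (-α) * Mφ) + ((a ^ (-α) * Mφ) + (1/(1-α)) * (K ^ (1-α) * L ^ (-α) * Mφ')) := by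
        gcongr <;> first | exact hubnorm | exact huanorm | exact hIA | exact hIB
    _ ≤ 3 * (a ^ (-α) * Mφ) + (1/(1-α)) * (K ^ (1-α) * L ^ (-α) * Mφ') := by linarith


set_option maxHeartbeats 1000000 in
/-- uniform bound for oscillatory fractional integrals over `(B₁, B₂)`,
allowing `B₂ = ∞`. -/
theorem stmt0 (α : ℝ) (hα0 : 0 < α) (hα1 : α < 1) :
    ∃ C : ℝ, 0 < C ∧
      ∀ (K : ℝ), 1 ≤ K →
      ∀ (φ : ℝ → ℝ), ContDiff ℝ 1 φ →
        Function.support φ ⊆ Set.Icc (-K) K →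
      ∀ (l : ℝ), l = -1 ∨ l = 1 →
      ∀ (B₁ : ℝ) (B₂ : EReal) (L : ℝ), 0 < B₁ → (B₁ : EReal) ≤ B₂ → 1 ≤ L →
        ‖∫ r in {r : ℝ | B₁ < r ∧ (r : EReal) < B₂},
            ((r ^ (-α) : ℝ) : ℂ) * Complex.exp (Complex.I * (l : ℂ) * (r : ℂ))
              * ((φ (r / L) : ℝ) : ℂ)‖
          ≤ C * (B₁ ^ (-α) * supNorm φ + K ^ (1 - α) * L ^ (-α) * supNorm (deriv φ)) := by
  have h1α : (0:ℝ) < 1 - α := by linarith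
  refine ⟨3 + 1/(1-α), by positivity, ?_⟩
  intro K hK φ hφ hsupp l hl B₁ B₂ L hB₁ hB₁B₂ hL
  have hL0 : (0:ℝ) < L := lt_of_lt_of_le one_pos hL
  have hK0 : (0:ℝ) < K := lt_of_lt_of_le one_pos hK
  set M : ℝ := K * L with hM
  set F : ℝ → ℂ := fun r => ((r ^ (-α) : ℝ) : ℂ)
      * Complex.exp (Complex.I * (l : ℂ) * (r : ℂ)) * ((φ (r / L) : ℝ) : ℂ) with hF
  have hcs : HasCompactSupport φ :=
    HasCompactSupport.intro isCompact_Icc fun x hx => by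
      by_contra h; exact hx (hsupp h)
  have hMφ0 : 0 ≤ supNorm φ := supNorm_nonneg φ
  have hMφ'0 : 0 ≤ supNorm (deriv φ) := supNorm_nonneg (deriv φ)
  set X : ℝ := B₁ ^ (-α) * supNorm φ with hX
  set Y : ℝ := K ^ (1-α) * L ^ (-α) * supNorm (deriv φ) with hY
  have hX0 : 0 ≤ X := mul_nonneg (Real.rpow_nonneg hB₁.le _) hMφ0
  have hY0 : 0 ≤ Y :=
    mul_nonneg (mul_nonneg (Real.rpow_nonneg hK0.le _) (Real.rpow_nonneg hL0.le _)) hMφ'0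
  have hRHS0 : 0 ≤ (3 + 1/(1-α)) * (X + Y) := by positivity
  have hfinal : 3 * X + (1/(1-α)) * Y ≤ (3 + 1/(1-α)) * (X + Y) := by
    have h2 : (0:ℝ) ≤ 1/(1-α) := by positivity
    nlinarith
  have hzero : ∀ r : ℝ, M < r → F r = 0 := by
    intro r hr
    have hφ0 : φ (r / L) = 0 := by
      by_contra h
      have := hsupp (Function.mem_support.mpr h)
      have hKr : K < r / L := (lt_div_iff₀ hL0).mpr (by linarith)
      exact absurd this.2 (not_le.mpr hKr)
    simp [hF, hφ0]
  -- continuity / integrability on [B₁, M]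
  have hfc : ContinuousOn F (Icc B₁ M) := by
    apply ContinuousOn.mul
    · apply ContinuousOn.mul
      · exact Complex.continuous_ofReal.comp_continuousOn
          (continuousOn_id.rpow_const fun x hx => Or.inl (ne_of_gt (lt_of_lt_of_le hB₁ hx.1)))
      · exact ((continuous_const.mul Complex.continuous_ofReal).cexp).continuousOn
    · exact (Complex.continuous_ofReal.comp (hφ.continuous.comp (continuous_id.div_const L))).continuousOn
  have hfIoc : IntegrableOn F (Ioc B₁ M) := (hfc.integrableOn_Icc).mono_set Ioc_subset_Icc_self
  have hfIoiM : IntegrableOn F (Ioi M) :=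
    (integrableOn_congr_fun (fun x hx => hzero x hx) measurableSet_Ioi).mpr
      (integrableOn_zero)
  have hIoiM0 : (∫ x in Ioi M, F x) = 0 :=
    setIntegral_eq_zero_of_forall_eq_zero fun x hx => hzero x hx
  rcases le_or_gt M B₁ with hMB | hBM
  · -- integrand vanishes on the whole region
    have h0 : ∀ x ∈ {r : ℝ | B₁ < r ∧ (r : EReal) < B₂}, F x = 0 :=
      fun x hx => hzero x (lt_of_le_of_lt hMB hx.1)
    rw [show (∫ r in {r : ℝ | B₁ < r ∧ (r : EReal) < B₂}, F r)
        = 0 from setIntegral_eq_zero_of_forall_eq_zero h0]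
    simpa using hRHS0
  · induction B₂ using EReal.rec with
    | bot =>
        rw [le_bot_iff] at hB₁B₂
        exact absurd hB₁B₂ (EReal.coe_ne_bot B₁)
    | top =>
        have hS : {r : ℝ | B₁ < r ∧ (r : EReal) < (⊤ : EReal)} = Ioi B₁ := by
          ext r; simp [EReal.coe_lt_top]
        rw [hS, ← Ioc_union_Ioi_eq_Ioi hBM.le,
          setIntegral_union (Ioc_disjoint_Ioi le_rfl) measurableSet_Ioi hfIoc hfIoiM,
          hIoiM0, add_zero, ← intervalIntegral.integral_of_le hBM.le]
        exact (core α hα0 hα1 K hK φ hφ hsupp l hl L hL B₁ M hB₁ hBM.le le_rfl).trans hfinal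
    | coe β =>
        have hβ : B₁ ≤ β := by exact_mod_cast hB₁B₂
        have hS : {r : ℝ | B₁ < r ∧ (r : EReal) < (β : EReal)} = Ioo B₁ β := by
          ext r; simp [EReal.coe_lt_coe_iff]
        rcases le_or_gt β M with hβM | hMβ
        · rw [hS, ← integral_Ioc_eq_integral_Ioo, ← intervalIntegral.integral_of_le hβ]
          exact (core α hα0 hα1 K hK φ hφ hsupp l hl L hL B₁ β hB₁ hβ hβM).trans hfinal
        · have hIoo0 : (∫ x in Ioo M β, F x) = 0 :=
            setIntegral_eq_zero_of_forall_eq_zero fun x hx => hzero x hx.1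
          rw [hS, ← Ioc_union_Ioo_eq_Ioo hBM.le hMβ,
            setIntegral_union ((Ioc_disjoint_Ioi le_rfl).mono_right Ioo_subset_Ioi_self)
              measurableSet_Ioo hfIoc (hfIoiM.mono_set Ioo_subset_Ioi_self),
            hIoo0, add_zero, ← intervalIntegral.integral_of_le hBM.le]
          exact (core α hα0 hα1 K hK φ hφ hsupp l hl L hL B₁ M hB₁ hBM.le le_rfl).trans hfinal
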